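/- For every fixed integer k ≥ 4, the sequence (χρ(S^n_k))_{n ∈ ℕ} of packing chromatic numbers of the Sierpiński graphs of base k is unbounded from above; that is, for every M there exists n such that χρ(S^n_k) > M. -/

import Mathlib

/-- The generalized Sierpiński graph `S^n_G` of a base graph `G` on the vertex set
`[k]_0 = {0, …, k−1}`: the vertices are the words of length `n` over `[k]_0`, and two
distinct words `u, v` are adjacent iff there is an index `i` with `u j = v j` for `j < i`,
`u i` adjacent to `v i` in `G`, and `u j = v i`, `v j = u i` for all `j > i`. -/
def genSierpinski {k : ℕ} (G : SimpleGraph (Fin k)) (n : ℕ) :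
    SimpleGraph (Fin n → Fin k) where
  Adj u v := ∃ i : Fin n,
    (∀ j, j < i → u j = v j) ∧ G.Adj (u i) (v i) ∧ ∀ j, i < j → u j = v i ∧ v j = u i
  symm := by
    constructor
    rintro u v ⟨i, h1, h2, h3⟩
    exact ⟨i, fun j hj => (h1 j hj).symm, h2.symm, fun j hj => ⟨(h3 j hj).2, (h3 j hj).1⟩⟩
  loopless := by
    constructor
    rintro u ⟨i, -, h2, -⟩
    exact G.irrefl h2

/-- The Sierpiński graph `S^n_k`, i.e. the generalized Sierpiński graph of the complete
graph `K_k` on `[k]_0` (in which two vertices are adjacent iff they are distinct). -/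
def sierpinski (k n : ℕ) : SimpleGraph (Fin n → Fin k) :=
  genSierpinski (⊤ : SimpleGraph (Fin k)) n

lemma sier_adj {k n : ℕ} (u v : Fin n → Fin k) :
    (sierpinski k n).Adj u v ↔ ∃ i : Fin n,
      (∀ j, j < i → u j = v j) ∧ u i ≠ v i ∧ ∀ j, i < j → u j = v i ∧ v j = u i := by
  simp [sierpinski, genSierpinski]

/-- Walk lemma: if u and v agree on the first j coordinates, there is a walk of
length ≤ 2^(n-j) - 1. -/
lemma sier_walk {k n : ℕ} : ∀ (d j : ℕ), j + d = n → ∀ u v : Fin n → Fin k,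
    (∀ l : Fin n, (l : ℕ) < j → u l = v l) →
    ∃ p : (sierpinski k n).Walk u v, p.length ≤ 2 ^ d - 1 := by
  intro d
  induction d with
  | zero =>
    intro j hj u v h
    have huv : u = v := funext fun l => h l (by omega)
    subst huv
    exact ⟨SimpleGraph.Walk.nil, by simp⟩
  | succ d ih =>
    intro j hj u v h
    have hjn : j < n := by omega
    set jf : Fin n := ⟨j, hjn⟩ with hjf
    by_cases hc : u jf = v jf
    · obtain ⟨p, hp⟩ := ih (j + 1) (by omega) u v (by
        intro l hl
        rcases Nat.lt_or_ge (l : ℕ) j with h' | h'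
        · exact h l h'
        · have : l = jf := by apply Fin.ext; show (l:ℕ) = j; omega
          rw [this]; exact hc)
      exact ⟨p, hp.trans (by have : 2 ^ d ≤ 2 ^ (d+1) := Nat.pow_le_pow_right (by norm_num) (by omega); omega)⟩
    · -- u' agrees with u up to j, constant v jf after; v' similarly
      set u' : Fin n → Fin k := fun l => if (l : ℕ) ≤ j then u l else v jf with hu'
      set v' : Fin n → Fin k := fun l => if (l : ℕ) ≤ j then v l else u jf with hv'
      obtain ⟨p1, hp1⟩ := ih (j + 1) (by omega) u u' (by
        intro l hl
        simp only [hu', if_pos (by omega : (l:ℕ) ≤ j)])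
      obtain ⟨p2, hp2⟩ := ih (j + 1) (by omega) v' v (by
        intro l hl
        simp only [hv', if_pos (by omega : (l:ℕ) ≤ j)])
      have hadj : (sierpinski k n).Adj u' v' := by
        rw [sier_adj]
        refine ⟨jf, ?_, ?_, ?_⟩
        · intro l hl
          have hl' : (l : ℕ) < j := hl
          simp only [hu', hv', if_pos (by omega : (l:ℕ) ≤ j)]
          exact h l hl'
        · simpa only [hu', hv', if_pos (show (jf:ℕ) ≤ j from le_refl j)] using hc
        · intro l hl
          have hl' : j < (l : ℕ) := hl
          constructor
          · simp only [hu', hv', if_neg (by omega : ¬ (l:ℕ) ≤ j), if_pos (show (jf:ℕ) ≤ j from le_refl j)]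
          · simp only [hu', hv', if_neg (by omega : ¬ (l:ℕ) ≤ j), if_pos (show (jf:ℕ) ≤ j from le_refl j)]
      refine ⟨p1.append (SimpleGraph.Walk.cons hadj p2), ?_⟩
      rw [SimpleGraph.Walk.length_append, SimpleGraph.Walk.length_cons]
      have : 2 ^ (d + 1) = 2 ^ d + 2 ^ d := by ring
      have h2 : 1 ≤ 2 ^ d := Nat.one_le_two_pow
      omega


/-- `c` is a `t`-packing coloring of `G`: every vertex gets a color in `{1, …, t}`, and any
two distinct vertices with the same color `i` are at distance greater than `i`
(equivalently, every walk between them has length greater than `i`). -/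
def IsPackingColoring {V : Type*} (G : SimpleGraph V) (t : ℕ) (c : V → ℕ) : Prop :=
  (∀ v, 1 ≤ c v ∧ c v ≤ t) ∧
    ∀ u v, u ≠ v → c u = c v → ∀ p : G.Walk u v, c u < p.length

/-- The packing chromatic number `χρ(G)`: the least `t` such that `G` admits a
`t`-packing coloring. -/
noncomputable def packingChromatic {V : Type*} (G : SimpleGraph V) : ℕ :=
  sInf {t | ∃ c : V → ℕ, IsPackingColoring G t c}


open Finset

/-- Generic class-size bound: the color class of `i` with `2^m - 1 ≤ i`, `m ≤ n`,
has at most `k^(n-m)` vertices. -/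
lemma class_bound {k n t : ℕ} {c : (Fin n → Fin k) → ℕ}
    (hc : IsPackingColoring (sierpinski k n) t c) {i m : ℕ} (hm : m ≤ n)
    (hi : 2 ^ m - 1 ≤ i) :
    (univ.filter (fun v : Fin n → Fin k => c v = i)).card ≤ k ^ (n - m) := by
  set f : (Fin n → Fin k) → (Fin (n - m) → Fin k) :=
    fun v => (fun l : Fin (n - m) => v (Fin.castLE (by omega) l)) with hf
  have hinj : Set.InjOn f ↑(univ.filter (fun v : Fin n → Fin k => c v = i)) := by
    intro u hu v hv huv
    by_contra hne
    have hu2 : c u = i := by simpa using hu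
    have hv2 : c v = i := by simpa using hv
    obtain ⟨p, hp⟩ := sier_walk (k := k) (n := n) m (n - m) (by omega) u v (by
      intro l hl
      have := congrFun huv ⟨(l : ℕ), by omega⟩
      simpa [hf] using this)
    have := hc.2 u v hne (hu2.trans hv2.symm) p
    rw [hu2] at this
    omega
  calc (univ.filter (fun v : Fin n → Fin k => c v = i)).card
      ≤ (univ : Finset (Fin (n - m) → Fin k)).card :=
        Finset.card_le_card_of_injOn f (fun v _ => mem_univ _) hinj
    _ = k ^ (n - m) := by rw [Finset.card_univ, Fintype.card_fun, Fintype.card_fin, Fintype.card_fin]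

def pref (k n : ℕ) (v : Fin n → Fin k) : Fin (n-2) → Fin k :=
  fun j => v (Fin.castLE (Nat.sub_le n 2) j)

def cnr (k n : ℕ) (p : Fin (n-2) → Fin k) (b : Fin k) : Fin n → Fin k :=
  fun l => if h : (l : ℕ) < n - 2 then p ⟨l, h⟩ else b

lemma pref_eq {k n : ℕ} {u v : Fin n → Fin k} (h : pref k n u = pref k n v)
    {l : Fin n} (hl : (l : ℕ) < n - 2) : u l = v l := by
  have := congrFun h ⟨(l : ℕ), hl⟩
  simp only [pref] at this
  have hc : Fin.castLE (Nat.sub_le n 2) ⟨(l : ℕ), hl⟩ = l := Fin.ext rfl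
  rwa [hc] at this

lemma conflict_adj {k n t : ℕ} {c : (Fin n → Fin k) → ℕ}
    (hc : IsPackingColoring (sierpinski k n) t c) {u v : Fin n → Fin k}
    (hu : c u = 2) (hv : c v = 2) (hadj : (sierpinski k n).Adj u v) : False := by
  have := hc.2 u v hadj.ne (hu.trans hv.symm) (SimpleGraph.Walk.cons hadj SimpleGraph.Walk.nil)
  simp [hu] at this

lemma conflict_two {k n t : ℕ} {c : (Fin n → Fin k) → ℕ}
    (hc : IsPackingColoring (sierpinski k n) t c) {u w v : Fin n → Fin k}
    (hu : c u = 2) (hv : c v = 2) (hne : u ≠ v)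
    (h1 : (sierpinski k n).Adj u w) (h2 : (sierpinski k n).Adj w v) : False := by
  have := hc.2 u v hne (hu.trans hv.symm)
    (SimpleGraph.Walk.cons h1 (SimpleGraph.Walk.cons h2 SimpleGraph.Walk.nil))
  simp [hu] at this

lemma clique_adj {k n : ℕ} (hn : 2 ≤ n) {u v : Fin n → Fin k}
    (hpre : pref k n u = pref k n v)
    (h2 : u ⟨n-2, by omega⟩ = v ⟨n-2, by omega⟩) (hne : u ≠ v) :
    (sierpinski k n).Adj u v := by
  rw [sier_adj]
  refine ⟨⟨n-1, by omega⟩, ?_, ?_, ?_⟩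
  · intro j hj
    have hj' : (j : ℕ) < n - 1 := hj
    rcases Nat.lt_or_ge (j : ℕ) (n-2) with h | h
    · exact pref_eq hpre h
    · have : j = (⟨n-2, by omega⟩ : Fin n) := Fin.ext (by simp; omega)
      rw [this]; exact h2
  · intro heq
    apply hne
    funext l
    rcases Nat.lt_or_ge (l : ℕ) (n-2) with h | h
    · exact pref_eq hpre h
    · rcases Nat.lt_or_ge (l : ℕ) (n-1) with h' | h'
      · have : l = (⟨n-2, by omega⟩ : Fin n) := Fin.ext (by simp; omega)
        rw [this]; exact h2
      · have : l = (⟨n-1, by omega⟩ : Fin n) := Fin.ext (by simp; omega)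
        rw [this]; exact heq
  · intro j hj
    have hj' : n - 1 < (j : ℕ) := hj
    exact absurd j.isLt (by omega)

lemma swap_adj {k n : ℕ} (hn : 2 ≤ n) {u v : Fin n → Fin k}
    (hpre : pref k n u = pref k n v)
    (hne2 : u ⟨n-2, by omega⟩ ≠ v ⟨n-2, by omega⟩)
    (hx : u ⟨n-1, by omega⟩ = v ⟨n-2, by omega⟩)
    (hy : v ⟨n-1, by omega⟩ = u ⟨n-2, by omega⟩) :
    (sierpinski k n).Adj u v := by
  rw [sier_adj]
  refine ⟨⟨n-2, by omega⟩, ?_, hne2, ?_⟩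
  · intro j hj
    have hj' : (j : ℕ) < n - 2 := hj
    exact pref_eq hpre hj'
  · intro j hj
    have hj' : n - 2 < (j : ℕ) := hj
    have : j = (⟨n-1, by omega⟩ : Fin n) := Fin.ext (by simp; omega)
    rw [this]
    exact ⟨hx, hy⟩

/-- Two distinct color-2 vertices in the same block: distinct clique indices, and the
last coordinate of one differs from the clique index of the other. -/
lemma two_pack_sep {k n t : ℕ} {c : (Fin n → Fin k) → ℕ}
    (hc : IsPackingColoring (sierpinski k n) t c) (hn : 2 ≤ n) {u v : Fin n → Fin k}
    (hu : c u = 2) (hv : c v = 2) (hne : u ≠ v) (hpre : pref k n u = pref k n v) :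
    u ⟨n-2, by omega⟩ ≠ v ⟨n-2, by omega⟩ ∧ v ⟨n-1, by omega⟩ ≠ u ⟨n-2, by omega⟩ := by
  have hI : u ⟨n-2, by omega⟩ ≠ v ⟨n-2, by omega⟩ := by
    intro heq
    exact conflict_adj hc hu hv (clique_adj hn hpre heq hne)
  refine ⟨hI, ?_⟩
  intro ha
  have h2n : n - 2 < n := by omega
  have h1n : n - 1 < n := by omega
  have hi12 : (⟨n-1, h1n⟩ : Fin n) ≠ ⟨n-2, h2n⟩ := by
    simp only [ne_eq, Fin.mk.injEq]; omega
  let w : Fin n → Fin k :=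
    Function.update (Function.update v ⟨n-2, h2n⟩ (u ⟨n-2, h2n⟩)) ⟨n-1, h1n⟩ (v ⟨n-2, h2n⟩)
  have hw2 : w ⟨n-2, h2n⟩ = u ⟨n-2, h2n⟩ := by
    show Function.update _ _ _ _ = _
    rw [Function.update_of_ne hi12.symm, Function.update_self]
  have hw1 : w ⟨n-1, h1n⟩ = v ⟨n-2, h2n⟩ := by
    show Function.update _ _ _ _ = _
    rw [Function.update_self]
  have hwl : ∀ l : Fin n, (l : ℕ) < n - 2 → w l = v l := by
    intro l hl
    have h1 : l ≠ ⟨n-1, h1n⟩ := by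
      simp only [ne_eq, Fin.ext_iff]; omega
    have h2 : l ≠ ⟨n-2, h2n⟩ := by
      simp only [ne_eq, Fin.ext_iff]; omega
    show Function.update _ _ _ _ = _
    rw [Function.update_of_ne h1, Function.update_of_ne h2]
  have hprew : pref k n v = pref k n w := by
    funext j
    have hj : ((Fin.castLE (Nat.sub_le n 2) j : Fin n) : ℕ) < n - 2 := j.isLt
    exact (hwl _ hj).symm
  have hadjvw : (sierpinski k n).Adj v w := by
    apply swap_adj hn hprew
    · rw [hw2]; exact fun h => hI h.symm
    · rw [hw2]; exact ha
    · rw [hw1]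
  by_cases hwu : w = u
  · rw [hwu] at hadjvw
    exact conflict_adj hc hv hu hadjvw
  · have hadjwu : (sierpinski k n).Adj w u := by
      apply clique_adj hn ?_ ?_ hwu
      · funext j
        have hj : ((Fin.castLE (Nat.sub_le n 2) j : Fin n) : ℕ) < n - 2 := j.isLt
        show w _ = u _
        rw [hwl _ hj]
        exact pref_eq hpre.symm hj
      · exact hw2
    exact conflict_two hc hv hu (fun h => hne h.symm) hadjvw hadjwu

/-- The set of color-2 vertices in the block of prefix `p`. -/
def Sp {k n : ℕ} (c : (Fin n → Fin k) → ℕ) (p : Fin (n-2) → Fin k) : Finset (Fin n → Fin k) :=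
  Finset.univ.filter (fun v => c v = 2 ∧ pref k n v = p)

lemma mem_Sp {k n : ℕ} {c : (Fin n → Fin k) → ℕ} {p : Fin (n-2) → Fin k}
    {v : Fin n → Fin k} : v ∈ Sp c p ↔ c v = 2 ∧ pref k n v = p := by
  simp [Sp]

lemma Sp_card_le {k n t : ℕ} {c : (Fin n → Fin k) → ℕ}
    (hc : IsPackingColoring (sierpinski k n) t c) (hn : 2 ≤ n)
    (p : Fin (n-2) → Fin k) : (Sp c p).card ≤ k := by
  have hinj : Set.InjOn (fun v : Fin n → Fin k => v ⟨n-2, by omega⟩) ↑(Sp c p) := by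
    intro u hu v hv huv
    rw [Finset.mem_coe, mem_Sp] at hu hv
    by_contra hne
    exact (two_pack_sep hc hn hu.1 hv.1 hne (hu.2.trans hv.2.symm)).1 huv
  calc (Sp c p).card ≤ (Finset.univ : Finset (Fin k)).card :=
        Finset.card_le_card_of_injOn _ (fun v _ => Finset.mem_univ _) hinj
    _ = k := by simp

lemma corner_mem {k n t : ℕ} {c : (Fin n → Fin k) → ℕ}
    (hc : IsPackingColoring (sierpinski k n) t c) (hn : 2 ≤ n)
    {p : Fin (n-2) → Fin k} (hfull : (Sp c p).card = k) (b : Fin k) :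
    cnr k n p b ∈ Sp c p := by
  have h2n : n - 2 < n := by omega
  -- the image of the clique-index map is everything
  have hinj : Set.InjOn (fun v : Fin n → Fin k => v ⟨n-2, h2n⟩) ↑(Sp c p) := by
    intro u hu v hv huv
    rw [Finset.mem_coe, mem_Sp] at hu hv
    by_contra hne
    exact (two_pack_sep hc hn hu.1 hv.1 hne (hu.2.trans hv.2.symm)).1 huv
  have himg : (Sp c p).image (fun v => v ⟨n-2, h2n⟩) = Finset.univ := by
    apply Finset.eq_univ_of_card
    rw [Finset.card_image_of_injOn hinj, hfull, Fintype.card_fin]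
  have hex : ∀ b' : Fin k, ∃ w ∈ Sp c p, w ⟨n-2, h2n⟩ = b' := by
    intro b'
    have : b' ∈ (Sp c p).image (fun v => v ⟨n-2, h2n⟩) := by rw [himg]; exact Finset.mem_univ _
    simpa using this
  obtain ⟨w, hwS, hwb⟩ := hex b
  have hw1 : w ⟨n-1, by omega⟩ = b := by
    by_contra hne1
    obtain ⟨w', hw'S, hw'b⟩ := hex (w ⟨n-1, by omega⟩)
    have hww' : w' ≠ w := by
      intro h
      rw [h] at hw'b
      rw [hwb] at hw'b
      exact hne1 hw'b.symm
    rw [mem_Sp] at hwS hw'S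
    exact (two_pack_sep hc hn hw'S.1 hwS.1 hww' (hw'S.2.trans hwS.2.symm)).2 hw'b.symm
  have : w = cnr k n p b := by
    funext l
    rcases Nat.lt_or_ge (l : ℕ) (n-2) with h | h
    · rw [mem_Sp] at hwS
      have : pref k n w = p := hwS.2
      have := congrFun this ⟨(l : ℕ), h⟩
      simp only [pref] at this
      have hcast : Fin.castLE (Nat.sub_le n 2) ⟨(l : ℕ), h⟩ = l := Fin.ext rfl
      rw [hcast] at this
      rw [this]
      simp only [cnr, dif_pos h]
    · simp only [cnr, dif_neg (by omega : ¬ (l : ℕ) < n - 2)]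
      rcases Nat.lt_or_ge (l : ℕ) (n-1) with h' | h'
      · have : l = (⟨n-2, h2n⟩ : Fin n) := Fin.ext (by simp; omega)
        rw [this]; exact hwb
      · have : l = (⟨n-1, by omega⟩ : Fin n) := Fin.ext (by simp; omega)
        rw [this]; exact hw1
  rw [← this]; exact hwS

def xP {k n : ℕ} (hn : 3 ≤ n) (p : Fin (n-2) → Fin k) : Fin k := p ⟨n-3, by omega⟩

def aP {k n : ℕ} (hk : 4 ≤ k) (hn : 3 ≤ n) (p : Fin (n-2) → Fin k) : Fin k :=
  if xP hn p = ⟨0, by omega⟩ then ⟨1, by omega⟩ else ⟨0, by omega⟩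

def vtxP {k n : ℕ} (hk : 4 ≤ k) (hn : 3 ≤ n) (p : Fin (n-2) → Fin k) : Fin n → Fin k :=
  fun l => if h : (l : ℕ) < n - 3 then p ⟨l, by omega⟩
    else if (l : ℕ) = n - 3 then aP hk hn p else xP hn p

lemma aP_ne_xP {k n : ℕ} (hk : 4 ≤ k) (hn : 3 ≤ n) (p : Fin (n-2) → Fin k) :
    aP hk hn p ≠ xP hn p := by
  unfold aP
  split_ifs with h
  · rw [h]
    simp [Fin.ext_iff]
  · exact fun h' => h h'.symm

lemma pref_vtx_lt {k n : ℕ} (hk : 4 ≤ k) (hn : 3 ≤ n) (p : Fin (n-2) → Fin k)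
    {j : Fin (n-2)} (hj : (j : ℕ) < n - 3) :
    pref k n (vtxP hk hn p) j = p j := by
  show vtxP hk hn p (Fin.castLE (Nat.sub_le n 2) j) = p j
  have hval : ((Fin.castLE (Nat.sub_le n 2) j : Fin n) : ℕ) = (j : ℕ) := rfl
  unfold vtxP
  rw [dif_pos (by omega : ((Fin.castLE (Nat.sub_le n 2) j : Fin n) : ℕ) < n - 3)]
  exact congrArg p (Fin.ext rfl)

lemma pref_vtx_eq {k n : ℕ} (hk : 4 ≤ k) (hn : 3 ≤ n) (p : Fin (n-2) → Fin k) :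
    pref k n (vtxP hk hn p) ⟨n-3, by omega⟩ = aP hk hn p := by
  show vtxP hk hn p (Fin.castLE (Nat.sub_le n 2) ⟨n-3, by omega⟩) = aP hk hn p
  unfold vtxP
  rw [dif_neg (by simp : ¬ ((Fin.castLE (Nat.sub_le n 2) (⟨n-3, by omega⟩ : Fin (n-2)) : Fin n) : ℕ) < n - 3)]
  simp

/-- The vertex `vtxP p` is the `xP p`-corner of its own block. -/
lemma cnr_pref_vtx {k n : ℕ} (hk : 4 ≤ k) (hn : 3 ≤ n) (p : Fin (n-2) → Fin k) :
    cnr k n (pref k n (vtxP hk hn p)) (xP hn p) = vtxP hk hn p := by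
  funext l
  unfold cnr
  rcases Nat.lt_or_ge (l : ℕ) (n-2) with h | h
  · rw [dif_pos h]
    exact congrArg (vtxP hk hn p) (Fin.ext rfl)
  · rw [dif_neg (by omega : ¬ (l : ℕ) < n - 2)]
    unfold vtxP
    rw [dif_neg (by omega : ¬ (l : ℕ) < n - 3), if_neg (by omega : ¬ (l : ℕ) = n - 3)]

lemma adj_cnr_vtx {k n : ℕ} (hk : 4 ≤ k) (hn : 3 ≤ n) (p : Fin (n-2) → Fin k) :
    (sierpinski k n).Adj (cnr k n p (aP hk hn p)) (vtxP hk hn p) := by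
  rw [sier_adj]
  refine ⟨⟨n-3, by omega⟩, ?_, ?_, ?_⟩
  · intro j hj
    have hj' : (j : ℕ) < n - 3 := hj
    unfold cnr vtxP
    rw [dif_pos (by omega : (j : ℕ) < n - 2), dif_pos hj']
  · unfold cnr vtxP
    rw [dif_pos (by omega : n - 3 < n - 2), dif_neg (by omega : ¬ (n-3 : ℕ) < n - 3),
      if_pos rfl]
    exact fun h => aP_ne_xP hk hn p h.symm
  · intro j hj
    have hj' : n - 3 < (j : ℕ) := hj
    have hj2 : ¬ (j : ℕ) < n - 2 := by omega
    constructor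
    · unfold cnr vtxP
      rw [dif_neg hj2, dif_neg (by omega : ¬ (n-3 : ℕ) < n - 3), if_pos rfl]
    · unfold cnr vtxP
      rw [dif_neg (by omega : ¬ (j : ℕ) < n - 3), if_neg (by omega : ¬ (j : ℕ) = n - 3),
        dif_pos (by omega : n - 3 < n - 2)]
      rfl

lemma V2_bound {k n t : ℕ} {c : (Fin n → Fin k) → ℕ}
    (hk : 4 ≤ k) (hn : 3 ≤ n) (hc : IsPackingColoring (sierpinski k n) t c) :
    5 * (Finset.univ.filter (fun v : Fin n → Fin k => c v = 2)).card ≤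
      5 * (k-1) * k^(n-2) + k^(n-1) := by
  classical
  have hn2 : 2 ≤ n := by omega
  have hfib : (Finset.univ.filter (fun v : Fin n → Fin k => c v = 2)).card
      = ∑ p : Fin (n-2) → Fin k, (Sp c p).card := by
    rw [Finset.card_eq_sum_card_fiberwise (f := pref k n) (t := Finset.univ)
      (fun x _ => Finset.mem_univ _)]
    apply Finset.sum_congr rfl
    intro p _
    congr 1
    rw [Finset.filter_filter]
    rfl
  set F := Finset.univ.filter (fun p : Fin (n-2) → Fin k => (Sp c p).card = k) with hF
  set NF := Finset.univ.filter (fun p : Fin (n-2) → Fin k => ¬ (Sp c p).card = k) with hNF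
  have hsplit : ∑ p : Fin (n-2) → Fin k, (Sp c p).card
      = ∑ p ∈ F, (Sp c p).card + ∑ p ∈ NF, (Sp c p).card :=
    (Finset.sum_filter_add_sum_filter_not Finset.univ _ _).symm
  have hFsum : ∑ p ∈ F, (Sp c p).card = k * F.card := by
    rw [Finset.sum_congr rfl (fun p hp => (Finset.mem_filter.mp hp).2), Finset.sum_const,
      smul_eq_mul, mul_comm]
  have hNFsum : ∑ p ∈ NF, (Sp c p).card ≤ NF.card * (k-1) := by
    apply Finset.sum_le_card_nsmul
    intro p hp
    have h1 := Sp_card_le hc hn2 p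
    have h2 := (Finset.mem_filter.mp hp).2
    omega
  have hcardB : F.card + NF.card = k^(n-2) := by
    rw [hF, hNF, Finset.card_filter_add_card_filter_not, Finset.card_univ,
      Fintype.card_fun, Fintype.card_fin, Fintype.card_fin]
  have hFle : F.card ≤ k * NF.card := by
    have hmem : ∀ p ∈ F, (pref k n (vtxP hk hn p), xP hn p) ∈ NF ×ˢ (Finset.univ : Finset (Fin k)) := by
      intro p hp
      rw [Finset.mem_product]
      refine ⟨?_, Finset.mem_univ _⟩
      rw [hNF, Finset.mem_filter]
      refine ⟨Finset.mem_univ _, ?_⟩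
      intro hfullq
      -- the corner of the target block is vtxP p, which is adjacent to a corner of p's block
      have h1 : cnr k n (pref k n (vtxP hk hn p)) (xP hn p) ∈ Sp c (pref k n (vtxP hk hn p)) :=
        corner_mem hc hn2 hfullq (xP hn p)
      rw [cnr_pref_vtx] at h1
      have h2 : cnr k n p (aP hk hn p) ∈ Sp c p :=
        corner_mem hc hn2 (Finset.mem_filter.mp hp).2 (aP hk hn p)
      rw [mem_Sp] at h1 h2
      exact conflict_adj hc h2.1 h1.1 (adj_cnr_vtx hk hn p)
    have hinj : Set.InjOn (fun p => (pref k n (vtxP hk hn p), xP hn p)) ↑F := by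
      intro p1 hp1 p2 hp2 heq
      simp only [Prod.mk.injEq] at heq
      funext j
      rcases Nat.lt_or_ge (j : ℕ) (n-3) with h | h
      · have e1 : pref k n (vtxP hk hn p1) j = p1 j := pref_vtx_lt hk hn p1 h
        have e2 : pref k n (vtxP hk hn p2) j = p2 j := pref_vtx_lt hk hn p2 h
        rw [← e1, ← e2, heq.1]
      · have : j = (⟨n-3, by omega⟩ : Fin (n-2)) := Fin.ext (by simp; omega)
        rw [this]
        exact heq.2
    calc F.card ≤ (NF ×ˢ (Finset.univ : Finset (Fin k))).card :=
          Finset.card_le_card_of_injOn _ hmem hinj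
      _ = k * NF.card := by
          rw [Finset.card_product, Finset.card_univ, Fintype.card_fin, mul_comm]
  have hpow : k^(n-1) = k^(n-2) * k := by
    rw [← pow_succ]
    congr 1
    omega
  have hS : (Finset.univ.filter (fun v : Fin n → Fin k => c v = 2)).card
      ≤ k * F.card + NF.card * (k-1) := by
    rw [hfib, hsplit, hFsum]
    omega
  -- arithmetic: 5*(k*a + b*(k-1)) ≤ 5*(k-1)*(a+b) + (a+b)*k
  have key : ∀ a b : ℕ, a ≤ k * b →
      5 * (k * a + b * (k-1)) ≤ 5 * (k-1) * (a+b) + (a+b) * k := by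
    intro a b hab
    obtain ⟨e, rfl⟩ : ∃ e, k = e + 4 := ⟨k - 4, by omega⟩
    have h43 : e + 4 - 1 = e + 3 := rfl
    rw [h43]
    nlinarith [hab]
  calc 5 * (Finset.univ.filter (fun v : Fin n → Fin k => c v = 2)).card
      ≤ 5 * (k * F.card + NF.card * (k-1)) := Nat.mul_le_mul_left 5 hS
    _ ≤ 5 * (k-1) * (F.card + NF.card) + (F.card + NF.card) * k := key _ _ hFle
    _ = 5 * (k-1) * k^(n-2) + k^(n-1) := by rw [hcardB, hpow]

open Finset in
/-- Geometric-type bound: `∑_{j=2}^{m-1} 2^j k^(n-j) + 2^(m+1) k^(n-m) ≤ 8 k^(n-2)`. -/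
lemma geom_bound {k n : ℕ} (hk : 4 ≤ k) : ∀ m, 2 ≤ m → m ≤ n →
    (∑ j ∈ Finset.Icc 2 (m-1), 2^j * k^(n-j)) + 2^(m+1) * k^(n-m) ≤ 8 * k^(n-2) := by
  intro m
  induction m with
  | zero => omega
  | succ m ih =>
    intro h2 hmn
    rcases Nat.lt_or_ge m 2 with hm | hm
    · -- m + 1 = 2
      have : m = 1 := by omega
      subst this
      rw [show Finset.Icc 2 (1+1-1) = ∅ from rfl, Finset.sum_empty, zero_add,
        show (2:ℕ)^(1+1+1) = 8 from rfl]
    · have ih' := ih hm (by omega)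
      have hstep : Finset.Icc 2 (m + 1 - 1) = insert m (Finset.Icc 2 (m-1)) := by
        rw [show m + 1 - 1 = m from rfl]
        ext j
        simp [Finset.mem_Icc, Finset.mem_insert]
        omega
      rw [hstep, Finset.sum_insert (by simp only [Finset.mem_Icc, not_and, not_le]; omega)]
      -- 2^m * k^(n-m) + (sum) + 2^(m+2) * k^(n-m-1) ≤ 8 * k^(n-2)
      have hkey : 2^(m+1+1) * k^(n-(m+1)) ≤ 2^m * k^(n-m) := by
        have e1 : k^(n-m) = k^(n-m-1) * k := by
          rw [← pow_succ]
          congr 1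
          omega
        have e2 : n - (m+1) = n - m - 1 := by omega
        rw [e2, e1]
        calc 2^(m+1+1) * k^(n-m-1) = 2^m * (k^(n-m-1) * 4) := by ring
          _ ≤ 2^m * (k^(n-m-1) * k) := by
              exact Nat.mul_le_mul_left _ (Nat.mul_le_mul_left _ hk)
      have hdbl : 2^(m+1) * k^(n-m) = 2^m * k^(n-m) + 2^m * k^(n-m) := by
        rw [pow_succ]; ring
      omega

lemma Tsum {k n t : ℕ} {c : (Fin n → Fin k) → ℕ}
    (hc : IsPackingColoring (sierpinski k n) t c) : ∀ m, 2 ≤ m → m ≤ n →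
    ∑ i ∈ Finset.Icc 3 (2^m - 2), (Finset.univ.filter (fun v : Fin n → Fin k => c v = i)).card
      ≤ ∑ j ∈ Finset.Icc 2 (m-1), 2^j * k^(n-j) := by
  intro m
  induction m with
  | zero => omega
  | succ m ih =>
    intro h2 hmn
    rcases Nat.lt_or_ge m 2 with hm | hm
    · have : m = 1 := by omega
      subst this
      rw [show (2:ℕ)^(1+1) - 2 = 2 from rfl,
        show Finset.Icc 3 2 = ∅ from rfl, Finset.sum_empty]
      exact Nat.zero_le _
    · have ih' := ih hm (by omega)
      have hpow : (2:ℕ)^(m+1) = 2 * 2^m := by rw [pow_succ]; ring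
      have h1m : (1:ℕ) ≤ 2^m := Nat.one_le_two_pow
      have h4m : (4:ℕ) ≤ 2^m := by
        calc (4:ℕ) = 2^2 := rfl
          _ ≤ 2^m := Nat.pow_le_pow_right (by omega) hm
      have hsplit : Finset.Icc 3 (2^(m+1) - 2)
          = Finset.Icc 3 (2^m - 2) ∪ Finset.Icc (2^m - 1) (2^(m+1) - 2) := by
        ext i
        simp only [Finset.mem_Icc, Finset.mem_union]
        omega
      have hdisj : Disjoint (Finset.Icc 3 (2^m - 2)) (Finset.Icc (2^m - 1) (2^(m+1) - 2)) := by
        rw [Finset.disjoint_left]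
        intro i hi hi'
        simp only [Finset.mem_Icc] at hi hi'
        omega
      rw [hsplit, Finset.sum_union hdisj]
      have hblock : ∑ i ∈ Finset.Icc (2^m - 1) (2^(m+1) - 2),
          (Finset.univ.filter (fun v : Fin n → Fin k => c v = i)).card
            ≤ 2^m * k^(n-m) := by
        calc ∑ i ∈ Finset.Icc (2^m - 1) (2^(m+1) - 2),
            (Finset.univ.filter (fun v : Fin n → Fin k => c v = i)).card
            ≤ (Finset.Icc (2^m - 1) (2^(m+1) - 2)).card * k^(n-m) := by
              apply Finset.sum_le_card_nsmul
              intro i hi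
              simp only [Finset.mem_Icc] at hi
              exact class_bound hc (m := m) (by omega) hi.1
          _ = 2^m * k^(n-m) := by
              rw [Nat.card_Icc]
              congr 1
              omega
      have hstep : Finset.Icc 2 (m + 1 - 1) = insert m (Finset.Icc 2 (m-1)) := by
        rw [show m + 1 - 1 = m from rfl]
        ext j
        simp only [Finset.mem_Icc, Finset.mem_insert]
        omega
      rw [hstep, Finset.sum_insert (by simp only [Finset.mem_Icc, not_and, not_le]; omega)]
      omega

lemma master_bound {k n t : ℕ} {c : (Fin n → Fin k) → ℕ}
    (hk : 4 ≤ k) (hn : 3 ≤ n) (hc : IsPackingColoring (sierpinski k n) t c) :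
    k^n ≤ k^(n-1) + (Finset.univ.filter (fun v : Fin n → Fin k => c v = 2)).card
      + 8 * k^(n-2) + t := by
  classical
  have hN : (Finset.univ : Finset (Fin n → Fin k)).card = k^n := by
    rw [Finset.card_univ, Fintype.card_fun, Fintype.card_fin, Fintype.card_fin]
  have hfib : (Finset.univ : Finset (Fin n → Fin k)).card
      = ∑ i ∈ Finset.Icc 1 t, (Finset.univ.filter (fun v : Fin n → Fin k => c v = i)).card :=
    Finset.card_eq_sum_card_fiberwise (fun v _ => Finset.mem_Icc.mpr (hc.1 v))
  set f : ℕ → ℕ := fun i => (Finset.univ.filter (fun v : Fin n → Fin k => c v = i)).card with hf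
  have h12 : ∑ i ∈ Finset.Icc 1 t, f i ≤ f 1 + (f 2 + ∑ i ∈ Finset.Icc 3 t, f i) := by
    calc ∑ i ∈ Finset.Icc 1 t, f i ≤ ∑ i ∈ insert 1 (insert 2 (Finset.Icc 3 t)), f i := by
          apply Finset.sum_le_sum_of_subset
          intro i hi
          simp only [Finset.mem_Icc] at hi
          simp only [Finset.mem_insert, Finset.mem_Icc]
          omega
      _ = f 1 + (f 2 + ∑ i ∈ Finset.Icc 3 t, f i) := by
          rw [Finset.sum_insert (by simp), Finset.sum_insert (by simp)]
  have h1n : (1:ℕ) ≤ 2^n := Nat.one_le_two_pow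
  have h2n : (2:ℕ)^3 ≤ 2^n := Nat.pow_le_pow_right (by omega) (by omega)
  have h3t : ∑ i ∈ Finset.Icc 3 t, f i
      ≤ ∑ i ∈ Finset.Icc 3 (2^n - 2), f i + ∑ i ∈ Finset.Icc (2^n - 1) t, f i := by
    rw [← Finset.sum_union (by
      rw [Finset.disjoint_left]
      intro i hi hi'
      simp only [Finset.mem_Icc] at hi hi'
      omega)]
    apply Finset.sum_le_sum_of_subset
    intro i hi
    simp only [Finset.mem_Icc] at hi
    simp only [Finset.mem_union, Finset.mem_Icc]
    omega
  have hmid : ∑ i ∈ Finset.Icc 3 (2^n - 2), f i ≤ 8 * k^(n-2) := by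
    calc ∑ i ∈ Finset.Icc 3 (2^n - 2), f i ≤ ∑ j ∈ Finset.Icc 2 (n-1), 2^j * k^(n-j) :=
          Tsum hc n (by omega) le_rfl
      _ ≤ 8 * k^(n-2) := by
          have := geom_bound (n := n) hk n (by omega) le_rfl
          omega
  have htail : ∑ i ∈ Finset.Icc (2^n - 1) t, f i ≤ t := by
    calc ∑ i ∈ Finset.Icc (2^n - 1) t, f i ≤ (Finset.Icc (2^n - 1) t).card * 1 := by
          apply Finset.sum_le_card_nsmul
          intro i hi
          simp only [Finset.mem_Icc] at hi
          have := class_bound hc (le_refl n) (i := i) (by omega)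
          simpa using this
      _ ≤ t := by
          rw [Nat.card_Icc, mul_one]
          omega
  have hf2 : (Finset.univ.filter (fun v : Fin n → Fin k => c v = 2)).card = f 2 := rfl
  have hone : f 1 ≤ k^(n-1) := by
    have := class_bound hc (m := 1) (i := 1) (by omega) (by omega)
    simpa using this
  have hfib' : k ^ n = ∑ i ∈ Finset.Icc 1 t, f i := hN.symm.trans hfib
  omega


/-- For every fixed `k ≥ 4`, the sequence `(χρ(S^n_k))_{n ∈ ℕ}` is unbounded from above:
for every `M` there exists `n` with `χρ(S^n_k) > M`. -/
theorem packingChromatic_sierpinski_unbounded (k : ℕ) (hk : 4 ≤ k) (M : ℕ) :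
    ∃ n : ℕ, 1 ≤ n ∧ M < packingChromatic (sierpinski k n) := by
  classical
  refine ⟨M + 5, by omega, ?_⟩
  set n := M + 5 with hn
  set SS := {t | ∃ c : (Fin n → Fin k) → ℕ, IsPackingColoring (sierpinski k n) t c} with hSS
  have hne : SS.Nonempty := by
    refine ⟨Fintype.card (Fin n → Fin k),
      fun v => ((Fintype.equivFin (Fin n → Fin k)) v : ℕ) + 1, ?_, ?_⟩
    · intro v
      constructor
      · show 1 ≤ ((Fintype.equivFin (Fin n → Fin k)) v : ℕ) + 1
        omega
      · exact Nat.succ_le_of_lt ((Fintype.equivFin (Fin n → Fin k)) v).isLt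
    · intro u v huv heq
      exfalso
      apply huv
      apply (Fintype.equivFin (Fin n → Fin k)).injective
      apply Fin.ext
      have heq' : ((Fintype.equivFin (Fin n → Fin k)) u : ℕ) + 1
          = ((Fintype.equivFin (Fin n → Fin k)) v : ℕ) + 1 := heq
      omega
  have hmem : sInf SS ∈ SS := Nat.sInf_mem hne
  obtain ⟨c, hc⟩ := hmem
  have hpc : packingChromatic (sierpinski k n) = sInf SS := rfl
  rw [hpc]
  set t := sInf SS with ht
  -- main estimates
  have hmb := master_bound hk (by omega) hc
  have hv2 := V2_bound hk (by omega) hc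
  -- arithmetic
  have eX1 : k^n = k^(M+3) * (k*k) := by
    show k^(M+5) = _
    rw [show M+5 = (M+3)+2 from by omega, pow_add]
    ring
  have eX2 : k^(n-1) = k^(M+3) * k := by
    show k^(M+4) = _
    rw [show M+4 = (M+3)+1 from by omega, pow_succ]
  have eX3 : k^(n-2) = k^(M+3) := rfl
  rw [eX1, eX2, eX3] at hmb
  rw [eX2, eX3] at hv2
  have hX4 : 4^(M+3) ≤ k^(M+3) := Nat.pow_le_pow_left hk _
  have h4M : 4^(M+3) = 64 * 4^M := by
    rw [show M+3 = M+3 from rfl, pow_add]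
    norm_num
    ring
  have hM2 : M < 2^M := Nat.lt_two_pow_self (n := M)
  have h24 : (2:ℕ)^M ≤ 4^M := Nat.pow_le_pow_left (by omega) M
  have hkey : k^(M+3) ≤ 5 * t := by
    obtain ⟨e, rfl⟩ : ∃ e, k = e + 4 := ⟨k - 4, by omega⟩
    have he1 : e + 4 - 1 = e + 3 := rfl
    rw [he1] at hv2
    nlinarith [hmb, hv2, Nat.zero_le ((e+4)^(M+3) * e * e), Nat.zero_le ((e+4)^(M+3) * e)]
  omega
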